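/- Let f ∈ W[[u]] be a power series whose constant coefficient f(0) is a unit of W. Then there exists a unique g ∈ W[[u]] with constant coefficient 1 such that f·g = f(0)·φ(g). -/

import Mathlib

open PowerSeries

/-- The Frobenius-semilinear map `φ` on `W(k)[[u]]`, sending `Σ wᵢ uⁱ` to `Σ F(wᵢ) u^{p·i}`,
where `F = WittVector.frobenius` is the Witt-vector Frobenius. -/
noncomputable def phiPS (p : ℕ) [Fact p.Prime] {k : Type*} [CommRing k]
    (g : PowerSeries (WittVector p k)) : PowerSeries (WittVector p k) :=
  PowerSeries.mk fun j =>
    if p ∣ j then WittVector.frobenius (PowerSeries.coeff (j / p) g) else 0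

/-- The coefficients of the solution `g`, defined by strong recursion. -/
noncomputable def gcoef (p : ℕ) [Fact p.Prime] {k : Type*} [CommRing k]
    (u : (WittVector p k)ˣ) (f : PowerSeries (WittVector p k)) : ℕ → WittVector p k
  | 0 => 1
  | (n+1) => (↑u⁻¹ : WittVector p k) *
      ((if p ∣ (n+1) then (u : WittVector p k) *
          WittVector.frobenius (gcoef p u f ((n+1)/p)) else 0)
        - ∑ i ∈ Finset.range (n+1),
            PowerSeries.coeff (i+1) f * gcoef p u f (n - i))
  decreasing_by
  · exact Nat.div_lt_self (Nat.succ_pos n) (Fact.out (p := p.Prime)).one_lt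
  · omega

lemma coeff_phiPS (p : ℕ) [Fact p.Prime] {k : Type*} [CommRing k]
    (g : PowerSeries (WittVector p k)) (j : ℕ) :
    PowerSeries.coeff j (phiPS p g) =
      if p ∣ j then WittVector.frobenius (PowerSeries.coeff (j / p) g) else 0 := by
  simp [phiPS]

lemma coeff_mul_succ (p : ℕ) [Fact p.Prime] {k : Type*} [CommRing k]
    (f g : PowerSeries (WittVector p k)) (n : ℕ) :
    PowerSeries.coeff (n+1) (f * g) =
      (∑ i ∈ Finset.range (n+1),
        PowerSeries.coeff (i+1) f * PowerSeries.coeff (n - i) g)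
      + constantCoeff f * PowerSeries.coeff (n+1) g := by
  rw [PowerSeries.coeff_mul, Finset.Nat.sum_antidiagonal_eq_sum_range_succ_mk,
    Finset.sum_range_succ']
  simp [PowerSeries.coeff_zero_eq_constantCoeff, Nat.succ_sub_succ]

theorem cyclic_BK_normal_form
    (p : ℕ) [Fact p.Prime] (k : Type*) [Field k] [CharP k p] [PerfectRing k p]
    (f : PowerSeries (WittVector p k))
    (hf : IsUnit (constantCoeff f)) :
    ∃! g : PowerSeries (WittVector p k),
      constantCoeff g = 1 ∧
        f * g = C (constantCoeff f) * phiPS p g := by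
  obtain ⟨u, hu⟩ := hf
  -- key: any solution has coefficients `gcoef`
  have key : ∀ g : PowerSeries (WittVector p k),
      constantCoeff g = 1 →
      f * g = C (constantCoeff f) * phiPS p g →
      ∀ n, PowerSeries.coeff n g = gcoef p u f n := by
    intro g hg1 hgeq n
    induction n using Nat.strong_induction_on with
    | _ n ih =>
      match n with
      | 0 => simpa [gcoef] using hg1
      | (n+1) =>
        have hc : PowerSeries.coeff (n+1) (f * g) =
            (↑u : WittVector p k) * PowerSeries.coeff (n+1) (phiPS p g) := by
          rw [hgeq, PowerSeries.coeff_C_mul, hu]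
        rw [coeff_mul_succ, coeff_phiPS] at hc
        have hdiv : (n+1)/p < n+1 :=
          Nat.div_lt_self (Nat.succ_pos n) (Fact.out (p := p.Prime)).one_lt
        have h2 : (↑u : WittVector p k) * PowerSeries.coeff (n+1) g =
            (if p ∣ (n+1) then (↑u : WittVector p k) *
                WittVector.frobenius (gcoef p u f ((n+1)/p)) else 0)
              - ∑ i ∈ Finset.range (n+1),
                  PowerSeries.coeff (i+1) f * gcoef p u f (n - i) := by
          rw [← hu] at hc
          rw [ih _ hdiv] at hc
          rw [mul_ite, mul_zero] at hc
          have hs : ∑ i ∈ Finset.range (n+1),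
              PowerSeries.coeff (i+1) f * gcoef p u f (n - i)
              = ∑ i ∈ Finset.range (n+1),
                  PowerSeries.coeff (i+1) f * PowerSeries.coeff (n - i) g := by
            apply Finset.sum_congr rfl
            intro i hi
            rw [ih (n - i) (by omega)]
          rw [hs]
          linear_combination hc
        calc PowerSeries.coeff (n+1) g
            = (↑u⁻¹ : WittVector p k) * ((↑u : WittVector p k) *
                PowerSeries.coeff (n+1) g) := by rw [Units.inv_mul_cancel_left]
          _ = gcoef p u f (n+1) := by rw [h2]; conv_rhs => rw [gcoef]
  refine ⟨PowerSeries.mk (gcoef p u f), ⟨?_, ?_⟩, ?_⟩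
  · simp [PowerSeries.constantCoeff_mk, gcoef]
  · apply PowerSeries.ext
    intro n
    match n with
    | 0 =>
      simp [PowerSeries.coeff_zero_eq_constantCoeff, map_mul, coeff_phiPS,
        PowerSeries.constantCoeff_mk, gcoef]
    | (n+1) =>
      rw [coeff_mul_succ, PowerSeries.coeff_C_mul, coeff_phiPS]
      simp only [PowerSeries.coeff_mk]
      rw [← hu]
      conv_lhs => rw [gcoef]
      rw [Units.mul_inv_cancel_left, mul_ite, mul_zero]
      ring
  · rintro g' ⟨hg1, hgeq⟩
    apply PowerSeries.ext
    intro n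
    rw [key g' hg1 hgeq n, PowerSeries.coeff_mk]
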